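/- arXiv:2504.10139 — 3 statements merged into one kernel-verified Lean document; each statement's English description precedes it below -/
import Mathlib

section
/- Let μ, a₀, a₁, x', y' ∈ ℝ and α_k, α_l, σ, σ_ε > 0. Let X ∼ N(μ, σ²) and ε ∼ N(0, σ_ε²) be independent, and set Y := a₀ + a₁X + ε. Define the 2×2 matrix A := [[1/α_k² + 1/σ² + a₁²/σ_ε², −a₁/σ_ε²], [−a₁/σ_ε², 1/α_l² + 1/σ_ε²]], the vector b := (x'/α_k² + μ/σ² − a₀a₁/σ_ε², y'/α_l² + a₀/σ_ε²), and the scalar c := −x'²/(2α_k²) − y'²/(2α_l²) − a₀²/(2σ_ε²) − μ²/(2σ²). Then E[ exp(−(X−x')²/(2α_k²)) · exp(−(Y−y')²/(2α_l²)) ] = (1/√(σ² σ_ε² det A)) · exp( c + (1/2)·bᵀ A⁻¹ b ). -/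
open MeasureTheory ProbabilityTheory Matrix

set_option maxHeartbeats 1000000

open MeasureTheory ProbabilityTheory Matrix Real
open scoped NNReal ENNReal

lemma integral_exp_quadratic' (p q r : ℝ) (hp : 0 < p) :
    ∫ x : ℝ, Real.exp (-(p * x ^ 2) + q * x + r)
      = Real.sqrt (π / p) * Real.exp (r + q ^ 2 / (4 * p)) := by
  have h : ∀ x : ℝ, -(p * x ^ 2) + q * x + r
      = -p * (x - q / (2 * p)) ^ 2 + (r + q ^ 2 / (4 * p)) := by
    intro x; field_simp; ring
  simp_rw [h, Real.exp_add]
  rw [integral_mul_const, integral_sub_right_eq_self (fun x => Real.exp (-p * x ^ 2)) (q / (2 * p)),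
    integral_gaussian]

lemma integral_gaussianReal_eq' (m : ℝ) {v : ℝ≥0} (hv : v ≠ 0) (f : ℝ → ℝ) :
    ∫ x, f x ∂(gaussianReal m v) = ∫ x, gaussianPDFReal m v x * f x := by
  rw [gaussianReal_of_var_ne_zero m hv]
  have h : gaussianPDF m v = fun x => ((gaussianPDFReal m v x).toNNReal : ℝ≥0∞) := rfl
  rw [h, integral_withDensity_eq_integral_smul
    ((measurable_gaussianPDFReal m v).real_toNNReal) f]
  congr 1; ext x
  rw [NNReal.smul_def, smul_eq_mul, Real.coe_toNNReal _ (gaussianPDFReal_nonneg m v x)]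

lemma integral_gaussianReal_exp_quadratic' (m w p q r : ℝ) (hw : 0 < w) (hp : 0 ≤ p) :
    ∫ x, Real.exp (-(p * x ^ 2) + q * x + r) ∂(gaussianReal m (w.toNNReal))
      = (Real.sqrt (2 * π * w))⁻¹ * (Real.sqrt (π / (p + 1 / (2 * w))) *
          Real.exp ((r - m ^ 2 / (2 * w)) + (q + m / w) ^ 2 / (4 * (p + 1 / (2 * w))))) := by
  have hv : (w.toNNReal : ℝ≥0) ≠ 0 := by
    simp [Real.toNNReal_eq_zero, not_le, hw]
  rw [integral_gaussianReal_eq' m hv]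
  have hco : ((w.toNNReal : ℝ≥0) : ℝ) = w := Real.coe_toNNReal _ hw.le
  have h : ∀ x, gaussianPDFReal m w.toNNReal x * Real.exp (-(p * x ^ 2) + q * x + r)
      = (Real.sqrt (2 * π * w))⁻¹ *
        Real.exp (-((p + 1 / (2 * w)) * x ^ 2) + (q + m / w) * x + (r - m ^ 2 / (2 * w))) := by
    intro x
    rw [gaussianPDFReal, hco, mul_assoc, ← Real.exp_add]
    congr 1
    field_simp
    ring
  simp_rw [h]
  rw [MeasureTheory.integral_const_mul, integral_exp_quadratic' _ _ _ (by positivity)]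

lemma sqrt_const_eq' (s t u v : ℝ) (hs : 0 < s) (ht : 0 < t) (hu : 0 < u) (hv : 0 < v) :
    1 / Real.sqrt (s * t * (4 * u * v))
      = (Real.sqrt (2 * π * t))⁻¹ * Real.sqrt (π / u)
        * ((Real.sqrt (2 * π * s))⁻¹ * Real.sqrt (π / v)) := by
  have hπ := Real.pi_pos
  rw [one_div, ← Real.sqrt_inv,
    show (s * t * (4 * u * v))⁻¹ = (2 * π * t)⁻¹ * (π / u) * ((2 * π * s)⁻¹ * (π / v)) by
      field_simp; ring,
    Real.sqrt_mul (by positivity), Real.sqrt_mul (by positivity),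
    Real.sqrt_mul (by positivity), Real.sqrt_inv, Real.sqrt_inv]



/-- Closed form of the joint expectation `E[k(X,x')·l(Y,y')]` for the linear-Gaussian
model `X ∼ N(μ,σ²)`, `Y = a₀ + a₁X + ε` with `ε ∼ N(0,σ_ε²)` independent of `X`, and
Gaussian feature/response kernels with lengthscales `α_k`, `α_l`. -/
theorem stmt_8 {Ω : Type*} [MeasurableSpace Ω] (P : Measure Ω) [IsProbabilityMeasure P]
    (μ a₀ a₁ x' y' : ℝ) (αk αl σ σε : ℝ)
    (hαk : 0 < αk) (hαl : 0 < αl) (hσ : 0 < σ) (hσε : 0 < σε)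
    (X ε : Ω → ℝ) (hX : Measurable X) (hε : Measurable ε)
    (hXlaw : P.map X = gaussianReal μ ((σ ^ 2).toNNReal))
    (hεlaw : P.map ε = gaussianReal 0 ((σε ^ 2).toNNReal))
    (hindep : IndepFun X ε P)
    (A : Matrix (Fin 2) (Fin 2) ℝ)
    (hA : A = !![1 / αk ^ 2 + 1 / σ ^ 2 + a₁ ^ 2 / σε ^ 2, -a₁ / σε ^ 2;
                 -a₁ / σε ^ 2, 1 / αl ^ 2 + 1 / σε ^ 2])
    (b : Fin 2 → ℝ)
    (hb : b = ![x' / αk ^ 2 + μ / σ ^ 2 - a₀ * a₁ / σε ^ 2, y' / αl ^ 2 + a₀ / σε ^ 2])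
    (c : ℝ)
    (hc : c = -x' ^ 2 / (2 * αk ^ 2) - y' ^ 2 / (2 * αl ^ 2)
          - a₀ ^ 2 / (2 * σε ^ 2) - μ ^ 2 / (2 * σ ^ 2)) :
    ∫ ω, Real.exp (-(X ω - x') ^ 2 / (2 * αk ^ 2)) *
        Real.exp (-((a₀ + a₁ * X ω + ε ω) - y') ^ 2 / (2 * αl ^ 2)) ∂P =
      (1 / Real.sqrt (σ ^ 2 * σε ^ 2 * A.det)) *
        Real.exp (c + (1 / 2) * (b ⬝ᵥ (A⁻¹ *ᵥ b))) := by
  have hαk2 : (αk:ℝ) ^ 2 ≠ 0 := by positivity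
  have hαl2 : (αl:ℝ) ^ 2 ≠ 0 := by positivity
  have hσ2 : (σ:ℝ) ^ 2 ≠ 0 := by positivity
  have hσε2 : (σε:ℝ) ^ 2 ≠ 0 := by positivity
  have hsum : (σε:ℝ) ^ 2 + αl ^ 2 ≠ 0 := by positivity
  set F : ℝ × ℝ → ℝ := fun p => Real.exp (-(p.1 - x') ^ 2 / (2 * αk ^ 2)) *
      Real.exp (-((a₀ + a₁ * p.1 + p.2) - y') ^ 2 / (2 * αl ^ 2)) with hF
  have hFmeas : Measurable F := by fun_prop
  have hmap : P.map (fun ω => (X ω, ε ω)) =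
      (gaussianReal μ ((σ ^ 2).toNNReal)).prod (gaussianReal 0 ((σε ^ 2).toNNReal)) := by
    rw [← hXlaw, ← hεlaw]
    exact (indepFun_iff_map_prod_eq_prod_map_map hX.aemeasurable hε.aemeasurable).mp hindep
  have hint : Integrable F
      ((gaussianReal μ ((σ ^ 2).toNNReal)).prod (gaussianReal 0 ((σε ^ 2).toNNReal))) := by
    refine Integrable.mono' (integrable_const 1) hFmeas.aestronglyMeasurable
      (ae_of_all _ fun p => ?_)
    rw [hF]
    simp only [Real.norm_eq_abs, abs_mul, abs_of_nonneg (Real.exp_nonneg _)]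
    refine mul_le_one₀ ?_ (Real.exp_nonneg _) ?_ <;>
    · rw [Real.exp_le_one_iff]
      apply div_nonpos_of_nonpos_of_nonneg (neg_nonpos.2 (sq_nonneg _)) (by positivity)
  have step1 : ∫ ω, Real.exp (-(X ω - x') ^ 2 / (2 * αk ^ 2)) *
        Real.exp (-((a₀ + a₁ * X ω + ε ω) - y') ^ 2 / (2 * αl ^ 2)) ∂P
      = ∫ x, ∫ e, F (x, e) ∂(gaussianReal 0 ((σε ^ 2).toNNReal))
          ∂(gaussianReal μ ((σ ^ 2).toNNReal)) := by
    rw [← integral_prod F hint, ← hmap,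
      integral_map (hX.prodMk hε).aemeasurable hFmeas.aestronglyMeasurable]
  rw [step1]
  have hP1 : (1 / (2 * αl ^ 2) + 1 / (2 * σε ^ 2) : ℝ) ≠ 0 := by positivity
  have h1 : ∀ x e : ℝ, F (x, e) = Real.exp (-((1 / (2 * αl ^ 2)) * e ^ 2)
      + (-(a₁ * x + a₀ - y') / αl ^ 2) * e
      + (-(x - x') ^ 2 / (2 * αk ^ 2) + -(a₁ * x + a₀ - y') ^ 2 / (2 * αl ^ 2))) := by
    intro x e
    rw [hF]; dsimp only; rw [← Real.exp_add]
    congr 1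
    field_simp
    ring
  have h1' : ∀ x : ℝ, ∫ e, F (x, e) ∂(gaussianReal 0 ((σε ^ 2).toNNReal))
      = (Real.sqrt (2 * π * σε ^ 2))⁻¹ * (Real.sqrt (π / (1 / (2 * αl ^ 2) + 1 / (2 * σε ^ 2))) *
        Real.exp (((-(x - x') ^ 2 / (2 * αk ^ 2) + -(a₁ * x + a₀ - y') ^ 2 / (2 * αl ^ 2))
            - 0 ^ 2 / (2 * σε ^ 2))
          + ((-(a₁ * x + a₀ - y') / αl ^ 2) + 0 / σε ^ 2) ^ 2
            / (4 * (1 / (2 * αl ^ 2) + 1 / (2 * σε ^ 2))))) := by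
    intro x
    simp_rw [h1 x]
    exact integral_gaussianReal_exp_quadratic' 0 (σε ^ 2) _ _ _ (by positivity) (by positivity)
  simp_rw [h1']
  have h2 : ∀ x : ℝ,
      (Real.sqrt (2 * π * σε ^ 2))⁻¹ * (Real.sqrt (π / (1 / (2 * αl ^ 2) + 1 / (2 * σε ^ 2))) *
        Real.exp (((-(x - x') ^ 2 / (2 * αk ^ 2) + -(a₁ * x + a₀ - y') ^ 2 / (2 * αl ^ 2))
            - 0 ^ 2 / (2 * σε ^ 2))
          + ((-(a₁ * x + a₀ - y') / αl ^ 2) + 0 / σε ^ 2) ^ 2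
            / (4 * (1 / (2 * αl ^ 2) + 1 / (2 * σε ^ 2)))))
      = ((Real.sqrt (2 * π * σε ^ 2))⁻¹ * Real.sqrt (π / (1 / (2 * αl ^ 2) + 1 / (2 * σε ^ 2)))) *
        Real.exp (-((1 / (2 * αk ^ 2) + a₁ ^ 2 / (2 * (σε ^ 2 + αl ^ 2))) * x ^ 2)
          + (x' / αk ^ 2 - a₁ * (a₀ - y') / (σε ^ 2 + αl ^ 2)) * x
          + (-x' ^ 2 / (2 * αk ^ 2) - (a₀ - y') ^ 2 / (2 * (σε ^ 2 + αl ^ 2)))) := by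
    intro x
    rw [← mul_assoc]
    congr 2
    field_simp
    ring
  simp_rw [h2]
  rw [MeasureTheory.integral_const_mul,
    integral_gaussianReal_exp_quadratic' μ (σ ^ 2) _ _ _ (by positivity) (by positivity)]
  -- final algebra
  set P₁ : ℝ := 1 / (2 * αl ^ 2) + 1 / (2 * σε ^ 2) with hP₁
  set P₂ : ℝ := (1 / (2 * αk ^ 2) + a₁ ^ 2 / (2 * (σε ^ 2 + αl ^ 2))) + 1 / (2 * σ ^ 2) with hP₂
  have hP1pos : 0 < P₁ := by rw [hP₁]; positivity
  have hP2pos : 0 < P₂ := by rw [hP₂]; positivity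
  have hdet : A.det = 4 * P₁ * P₂ := by
    rw [hA, Matrix.det_fin_two_of, hP₁, hP₂]
    field_simp
    ring
  have hbab : b ⬝ᵥ (A⁻¹ *ᵥ b) = (A.det)⁻¹ *
      ((y' / αl ^ 2 + a₀ / σε ^ 2) ^ 2 * (1 / αk ^ 2 + 1 / σ ^ 2 + a₁ ^ 2 / σε ^ 2)
        + 2 * (x' / αk ^ 2 + μ / σ ^ 2 - a₀ * a₁ / σε ^ 2) * (y' / αl ^ 2 + a₀ / σε ^ 2) * (a₁ / σε ^ 2)
        + (x' / αk ^ 2 + μ / σ ^ 2 - a₀ * a₁ / σε ^ 2) ^ 2 * (1 / αl ^ 2 + 1 / σε ^ 2)) := by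
    rw [Matrix.inv_def, hdet]
    rw [hA, hb]
    simp [Matrix.adjugate_fin_two, Matrix.mulVec, dotProduct, Fin.sum_univ_two,
      Ring.inverse_eq_inv', Matrix.det_fin_two_of]
    ring
  rw [hdet, sqrt_const_eq' _ _ _ _ (by positivity) (by positivity) hP1pos hP2pos, hbab, hdet,
    hc, hP₁, hP₂]
  have hexp : ((((-x' ^ 2 / (2 * αk ^ 2) - (a₀ - y') ^ 2 / (2 * (σε ^ 2 + αl ^ 2))))
            - μ ^ 2 / (2 * σ ^ 2))
          + ((x' / αk ^ 2 - a₁ * (a₀ - y') / (σε ^ 2 + αl ^ 2)) + μ / σ ^ 2) ^ 2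
            / (4 * ((1 / (2 * αk ^ 2) + a₁ ^ 2 / (2 * (σε ^ 2 + αl ^ 2))) + 1 / (2 * σ ^ 2))))
      = (-x' ^ 2 / (2 * αk ^ 2) - y' ^ 2 / (2 * αl ^ 2) - a₀ ^ 2 / (2 * σε ^ 2) - μ ^ 2 / (2 * σ ^ 2))
        + (1 / 2) * ((4 * (1 / (2 * αl ^ 2) + 1 / (2 * σε ^ 2)) * ((1 / (2 * αk ^ 2) + a₁ ^ 2 / (2 * (σε ^ 2 + αl ^ 2))) + 1 / (2 * σ ^ 2)))⁻¹ *
      ((y' / αl ^ 2 + a₀ / σε ^ 2) ^ 2 * (1 / αk ^ 2 + 1 / σ ^ 2 + a₁ ^ 2 / σε ^ 2)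
        + 2 * (x' / αk ^ 2 + μ / σ ^ 2 - a₀ * a₁ / σε ^ 2) * (y' / αl ^ 2 + a₀ / σε ^ 2) * (a₁ / σε ^ 2)
        + (x' / αk ^ 2 + μ / σ ^ 2 - a₀ * a₁ / σε ^ 2) ^ 2 * (1 / αl ^ 2 + 1 / σε ^ 2))) := by
    have h4 : (4 * (1 / (2 * αl ^ 2) + 1 / (2 * σε ^ 2)) * ((1 / (2 * αk ^ 2) + a₁ ^ 2 / (2 * (σε ^ 2 + αl ^ 2))) + 1 / (2 * σ ^ 2)) : ℝ) ≠ 0 := by positivity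
    field_simp
    ring
  rw [hexp]
  ring
end

section
/- Let m ∈ ℝ and α, σ_ε > 0. Then the double expectation of the Gaussian kernel with lengthscale α under two independent draws from N(m, σ_ε²) satisfies ∫_ℝ ∫_ℝ exp(−(y−y')²/(2α²)) dN(m, σ_ε²)(y') dN(m, σ_ε²)(y) = √( (σ_ε² + α²) / ( (1 + σ_ε²/α²)·(2σ_ε² + α²) ) ). In particular this value does not depend on the mean m. -/
open MeasureTheory ProbabilityTheory Real
open scoped NNReal ENNReal

lemma gauss_int (m c a s : ℝ) (ha : 0 < a) (hs : 0 < s) :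
    ∫ x, Real.exp (-(c - x) ^ 2 / (2 * a ^ 2)) ∂(gaussianReal m ((s ^ 2).toNNReal))
      = Real.sqrt (a ^ 2 / (a ^ 2 + s ^ 2)) *
        Real.exp (-(c - m) ^ 2 / (2 * (a ^ 2 + s ^ 2))) := by
  have hs2 : (0:ℝ) < s ^ 2 := by positivity
  have hv : ((s ^ 2).toNNReal) ≠ 0 := by
    simp [Real.toNNReal_eq_zero, not_le, hs2, hs.ne']
  have hvc : (((s ^ 2).toNNReal : ℝ≥0) : ℝ) = s ^ 2 := Real.coe_toNNReal _ hs2.le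
  rw [gaussianReal_of_var_ne_zero _ hv]
  have hdens : volume.withDensity (gaussianPDF m ((s ^ 2).toNNReal))
      = volume.withDensity (fun x => ((gaussianPDFReal m ((s ^ 2).toNNReal) x).toNNReal : ℝ≥0∞)) := rfl
  rw [hdens, integral_withDensity_eq_integral_smul
    ((measurable_gaussianPDFReal m ((s ^ 2).toNNReal)).real_toNNReal)]
  simp only [NNReal.smul_def, smul_eq_mul,
    Real.coe_toNNReal _ (gaussianPDFReal_nonneg _ _ _)]
  set v : ℝ := s ^ 2 with hvdef
  have hva : (0:ℝ) < v + a ^ 2 := by positivity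
  set B : ℝ := (v + a ^ 2) / (2 * v * a ^ 2) with hB
  have hBpos : 0 < B := by positivity
  set x₀ : ℝ := (a ^ 2 * m + v * c) / (v + a ^ 2) with hx0
  set C : ℝ := (Real.sqrt (2 * π * v))⁻¹ *
    Real.exp (-(c - m) ^ 2 / (2 * (a ^ 2 + v))) with hC
  have key : ∀ x : ℝ, gaussianPDFReal m ((s ^ 2).toNNReal) x *
      Real.exp (-(c - x) ^ 2 / (2 * a ^ 2)) = C * Real.exp (-B * (x - x₀) ^ 2) := by
    intro x
    rw [gaussianPDFReal, hvc, hC]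
    simp only [mul_assoc, ← Real.exp_add]
    congr 2
    rw [hB, hx0]
    have hπ : (0:ℝ) < π := Real.pi_pos
    field_simp
    ring
  rw [integral_congr_ae (Filter.Eventually.of_forall key)]
  rw [integral_const_mul, integral_sub_right_eq_self (fun x => Real.exp (-B * x ^ 2)) x₀,
    integral_gaussian]
  have harith : C * Real.sqrt (π / B) =
      Real.sqrt (a ^ 2 / (a ^ 2 + v)) * Real.exp (-(c - m) ^ 2 / (2 * (a ^ 2 + v))) := by
    rw [hC]
    have h1 : π / B = (2 * π * v) * (a ^ 2 / (a ^ 2 + v)) := by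
      rw [hB]; field_simp; ring
    rw [h1, Real.sqrt_mul (by positivity)]
    have h2 : (0:ℝ) < Real.sqrt (2 * π * v) := Real.sqrt_pos.mpr (by positivity)
    field_simp
    rw [← Real.sqrt_mul (by positivity : (0:ℝ) ≤ 2 * π),
      ← Real.sqrt_mul (by positivity : (0:ℝ) ≤ 2 * π * v)]
    congr 1
    ring
  exact harith

/-- Closed form of the double Gaussian-kernel expectation under two independent draws
from `N(m, σ_ε²)`; in particular the value does not depend on the mean `m`. -/
theorem stmt_11 (m : ℝ) (α σε : ℝ) (hα : 0 < α) (hσε : 0 < σε) :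
    ∫ y, (∫ y', Real.exp (-(y - y') ^ 2 / (2 * α ^ 2))
        ∂(gaussianReal m ((σε ^ 2).toNNReal))) ∂(gaussianReal m ((σε ^ 2).toNNReal)) =
      Real.sqrt ((σε ^ 2 + α ^ 2) / ((1 + σε ^ 2 / α ^ 2) * (2 * σε ^ 2 + α ^ 2))) := by
  have h1 : ∀ y : ℝ, ∫ y', Real.exp (-(y - y') ^ 2 / (2 * α ^ 2))
      ∂(gaussianReal m ((σε ^ 2).toNNReal)) =
      Real.sqrt (α ^ 2 / (α ^ 2 + σε ^ 2)) *
        Real.exp (-(y - m) ^ 2 / (2 * (α ^ 2 + σε ^ 2))) := fun y =>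
    gauss_int m y α σε hα hσε
  simp_rw [h1]
  rw [integral_const_mul]
  have hb : (0:ℝ) < α ^ 2 + σε ^ 2 := by positivity
  have hb' : Real.sqrt (α ^ 2 + σε ^ 2) ^ 2 = α ^ 2 + σε ^ 2 := Real.sq_sqrt hb.le
  have h2 := gauss_int m m (Real.sqrt (α ^ 2 + σε ^ 2)) σε (Real.sqrt_pos.mpr hb) hσε
  rw [hb'] at h2
  have h3 : ∀ y : ℝ, Real.exp (-(y - m) ^ 2 / (2 * (α ^ 2 + σε ^ 2)))
      = Real.exp (-(m - y) ^ 2 / (2 * (α ^ 2 + σε ^ 2))) := by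
    intro y; ring_nf
  simp_rw [h3]
  rw [h2]
  simp only [sub_self, ne_eq]
  rw [show -(0:ℝ) ^ 2 / (2 * (α ^ 2 + σε ^ 2 + σε ^ 2)) = 0 by ring, Real.exp_zero, mul_one]
  rw [← Real.sqrt_mul (by positivity)]
  congr 1
  have hα2 : α ^ 2 ≠ 0 := by positivity
  field_simp
  ring
end

section
/- Let 𝒳 be a set, k : 𝒳 × 𝒳 → ℝ a symmetric function, H a real Hilbert space, and λ > 0. Fix data points x₁,…,xₙ ∈ 𝒳 with feature vectors f₁,…,fₙ ∈ H, compressed inputs x̃₁,…,x̃ₘ ∈ 𝒳, and compressed feature vectors g₁,…,gₘ ∈ H. Let K_{X̃X̃} ∈ ℝ^{m×m} have entries k(x̃ᵢ,x̃ⱼ), assume W := (K_{X̃X̃} + λI)⁻¹ exists, let K_{X̃X} ∈ ℝ^{m×n} have entries k(x̃ᵢ, x_p), K_{XX̃} := K_{X̃X}ᵀ, set S := W K_{X̃X} K_{XX̃} W and V := W K_{X̃X}, and for a tuple (h₁,…,hₘ) ∈ Hᵐ define J(h₁,…,hₘ) := (1/n) Σ_{i,j=1}^{m} ⟪hᵢ,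 hⱼ⟫ S_{ji} − (2/n) Σ_{p=1}^{n} Σ_{i=1}^{m} ⟪f_p, hᵢ⟫ V_{ip}. Fix an index t and, for g ∈ H, let Ỹ[t:=g] denote (g₁,…,g_{t−1}, g, g_{t+1},…,gₘ), and define R(g) := (2/n) Σ_{i≠t} ⟪g, gᵢ⟫ S_{it} − (2/n) Σ_{p=1}^{n} ⟪f_p, g⟫ V_{tp}. Then for any g, g' ∈ H with ‖g‖ = ‖g'‖, J(Ỹ[t:=g]) − R(g) = J(Ỹ[t:=g']) − R(g'). That is, as a function of the t-th compressed response of fixed norm, the ACKIP objective differs from R by a constant. -/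
open RealInnerProductSpace Matrix
open scoped BigOperators

/-- As a function of the `t`-th compressed response of fixed norm, the ACKIP objective
`J` differs from the reduced objective `R` by a constant; this justifies the accelerated
exhaustive search over discrete response values. -/
theorem stmt_14 {𝒳 H : Type*} [NormedAddCommGroup H] [InnerProductSpace ℝ H]
    (k : 𝒳 → 𝒳 → ℝ) (hk : ∀ a b, k a b = k b a)
    {n m : ℕ}
    (x : Fin n → 𝒳) (f : Fin n → H)
    (xt : Fin m → 𝒳) (gs : Fin m → H)
    (lam : ℝ) (hlam : 0 < lam)
    (W : Matrix (Fin m) (Fin m) ℝ)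
    (hW₁ : (Matrix.of (fun i j => k (xt i) (xt j)) + lam • (1 : Matrix (Fin m) (Fin m) ℝ)) * W = 1)
    (hW₂ : W * (Matrix.of (fun i j => k (xt i) (xt j)) + lam • (1 : Matrix (Fin m) (Fin m) ℝ)) = 1)
    (KtX : Matrix (Fin m) (Fin n) ℝ) (hKtX : KtX = Matrix.of fun i p => k (xt i) (x p))
    (S : Matrix (Fin m) (Fin m) ℝ) (hS : S = W * KtX * KtXᵀ * W)
    (V : Matrix (Fin m) (Fin n) ℝ) (hV : V = W * KtX)
    (J : (Fin m → H) → ℝ)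
    (hJ : ∀ h : Fin m → H, J h =
        (1 / (n : ℝ)) * ∑ i, ∑ j, ⟪h i, h j⟫ * S j i
          - (2 / (n : ℝ)) * ∑ p, ∑ i, ⟪f p, h i⟫ * V i p)
    (t : Fin m)
    (R : H → ℝ)
    (hR : ∀ g : H, R g =
        (2 / (n : ℝ)) * ∑ i ∈ Finset.univ.erase t, ⟪g, gs i⟫ * S i t
          - (2 / (n : ℝ)) * ∑ p, ⟪f p, g⟫ * V t p)
    (g g' : H) (hgg' : ‖g‖ = ‖g'‖) :
    J (Function.update gs t g) - R g = J (Function.update gs t g') - R g' := by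
  -- W is symmetric
  set A : Matrix (Fin m) (Fin m) ℝ :=
    Matrix.of (fun i j => k (xt i) (xt j)) + lam • (1 : Matrix (Fin m) (Fin m) ℝ) with hA
  have hAsymm : Aᵀ = A := by
    rw [hA, Matrix.transpose_add, Matrix.transpose_smul, Matrix.transpose_one]
    congr 1
    ext i j
    exact hk (xt j) (xt i)
  have hWA : Wᵀ * A = 1 := by
    have : (Aᵀ * W)ᵀ = Wᵀ * A := by rw [Matrix.transpose_mul, Matrix.transpose_transpose]
    rw [← this, hAsymm, hW₁, Matrix.transpose_one]
  have hWsymm : Wᵀ = W := by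
    calc Wᵀ = Wᵀ * (A * W) := by rw [hW₁, Matrix.mul_one]
    _ = (Wᵀ * A) * W := by rw [Matrix.mul_assoc]
    _ = W := by rw [hWA, Matrix.one_mul]
  have hSsymm : ∀ i j, S i j = S j i := by
    intro i j
    have : Sᵀ = S := by
      rw [hS]
      repeat rw [Matrix.transpose_mul]
      rw [Matrix.transpose_transpose, hWsymm, Matrix.mul_assoc, Matrix.mul_assoc]
    conv_lhs => rw [← this, Matrix.transpose_apply]
  have split : ∀ (F : Fin m → ℝ), ∑ i, F i = (∑ i ∈ Finset.univ.erase t, F i) + F t :=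
    fun F => (Finset.sum_erase_add _ _ (Finset.mem_univ t)).symm
  have key : ∀ gg : H, J (Function.update gs t gg) - R gg =
      ((1 / (n : ℝ)) * ∑ i ∈ Finset.univ.erase t, ∑ j ∈ Finset.univ.erase t,
          ⟪gs i, gs j⟫ * S j i
        - (2 / (n : ℝ)) * ∑ p, ∑ i ∈ Finset.univ.erase t, ⟪f p, gs i⟫ * V i p)
      + (1 / (n : ℝ)) * (‖gg‖ ^ 2 * S t t) := by
    intro gg
    have hut : Function.update gs t gg t = gg := Function.update_self t gg gs
    have hui : ∀ i ∈ Finset.univ.erase t, Function.update gs t gg i = gs i := by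
      intro i hi
      exact Function.update_of_ne (Finset.ne_of_mem_erase hi) gg gs
    rw [hJ, hR]
    have e1 : ∑ i, ∑ j, ⟪Function.update gs t gg i, Function.update gs t gg j⟫ * S j i
        = (∑ i ∈ Finset.univ.erase t, ∑ j ∈ Finset.univ.erase t, ⟪gs i, gs j⟫ * S j i)
          + (∑ i ∈ Finset.univ.erase t, ⟪gs i, gg⟫ * S t i)
          + ((∑ j ∈ Finset.univ.erase t, ⟪gg, gs j⟫ * S j t) + ⟪gg, gg⟫ * S t t) := by
      rw [split]
      congr 1
      · rw [← Finset.sum_add_distrib]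
        apply Finset.sum_congr rfl
        intro i hi
        rw [split]
        congr 1
        · apply Finset.sum_congr rfl
          intro j hj
          rw [hui i hi, hui j hj]
        · rw [hui i hi, hut]
      · rw [split]
        congr 1
        · apply Finset.sum_congr rfl
          intro j hj
          rw [hut, hui j hj]
        · rw [hut]
    have e2 : ∑ p, ∑ i, ⟪f p, Function.update gs t gg i⟫ * V i p
        = (∑ p, ∑ i ∈ Finset.univ.erase t, ⟪f p, gs i⟫ * V i p)
          + ∑ p, ⟪f p, gg⟫ * V t p := by
      rw [← Finset.sum_add_distrib]
      apply Finset.sum_congr rfl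
      intro p _
      rw [split]
      congr 1
      · apply Finset.sum_congr rfl
        intro i hi
        rw [hui i hi]
      · rw [hut]
    have e3 : ∑ i ∈ Finset.univ.erase t, ⟪gs i, gg⟫ * S t i
        = ∑ i ∈ Finset.univ.erase t, ⟪gg, gs i⟫ * S i t := by
      apply Finset.sum_congr rfl
      intro i _
      rw [real_inner_comm, hSsymm]
    have e4 : ⟪gg, gg⟫ = ‖gg‖ ^ 2 := real_inner_self_eq_norm_sq gg
    rw [e1, e2, e3, e4]
    ring
  rw [key g, key g', hgg']
end
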